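/- The bilinear bracket defined on the free real vector space with basis {L_m, J_m, P¹_m, P²_m : m ∈ ℤ} ∪ {α, β} by [L_m,L_n] = (m−n)L_{m+n} + (α/12)·m(m²−1)·δ_{m+n,0}, [L_m,P^i_n] = (m−n)P^i_{m+n}, [L_m,J_n] = −n·J_{m+n}, [J_m,P^i_n] = Σ_j ε_{ij} P^j_{m+n}, [J_m,J_n] = β·m·δ_{m+n,0}, [P^i_m,P^j_n] = 0, and with α, β central (all other brackets of basis elements zero), extended bilinearly, is antisymmetric and satisfies the Jacobi identity; hence it makes this vector space a real Lie algebra (denoted 𝔤). -/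

import Mathlib

/-!
STATEMENT 0: The bilinear bracket on the free real vector space with basis
{L_m, J_m, P¹_m, P²_m : m ∈ ℤ} ∪ {α, β} defined by
[L_m,L_n] = (m−n)L_{m+n} + (α/12)·m(m²−1)·δ_{m+n,0},
[L_m,P^i_n] = (m−n)P^i_{m+n}, [L_m,J_n] = −n·J_{m+n},
[J_m,P^i_n] = Σ_j ε_{ij} P^j_{m+n}, [J_m,J_n] = β·m·δ_{m+n,0},
[P^i_m,P^j_n] = 0, with α, β central, extended bilinearly,
is antisymmetric and satisfies the Jacobi identity (hence gives a real Lie algebra 𝔤).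
-/

/-- Basis of the centrally extended planar Galilean conformal algebra 𝔤:
`L m`, `J m`, `P i m` (i ∈ {1,2} represented by `Fin 2`, m ∈ ℤ) and the
central elements `Ca` (called α) and `Cb` (called β). -/
inductive GBasis : Type
  | L : ℤ → GBasis
  | J : ℤ → GBasis
  | P : Fin 2 → ℤ → GBasis
  | Ca : GBasis
  | Cb : GBasis
  deriving DecidableEq

noncomputable section

/-- The antisymmetric symbol: ε_{12} = −ε_{21} = 1, ε_{11} = ε_{22} = 0
(indices 1,2 are represented by 0,1 : Fin 2). -/
def eps (i j : Fin 2) : ℝ :=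
  if i = j then 0 else if i = (0 : Fin 2) then 1 else -1

/-- The vector space underlying 𝔤: the free real vector space on `GBasis`. -/
abbrev GCA : Type := GBasis →₀ ℝ

/-- The bracket on basis elements. -/
def bracketB : GBasis → GBasis → GCA
  | .L m, .L n =>
      ((m : ℝ) - n) • Finsupp.single (.L (m + n)) 1 +
        (if m + n = 0 then ((m : ℝ) * ((m : ℝ) ^ 2 - 1) / 12) • Finsupp.single .Ca 1
         else 0)
  | .L m, .P i n => ((m : ℝ) - n) • Finsupp.single (.P i (m + n)) 1
  | .P i n, .L m => -(((m : ℝ) - n) • Finsupp.single (.P i (m + n)) 1)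
  | .L m, .J n => (-(n : ℝ)) • Finsupp.single (.J (m + n)) 1
  | .J n, .L m => ((n : ℝ)) • Finsupp.single (.J (m + n)) 1
  | .J m, .P i n => ∑ j : Fin 2, eps i j • Finsupp.single (.P j (m + n)) 1
  | .P i n, .J m => -(∑ j : Fin 2, eps i j • Finsupp.single (.P j (m + n)) 1)
  | .J m, .J n => if m + n = 0 then (m : ℝ) • Finsupp.single .Cb 1 else 0
  | _, _ => 0

/-- The bracket, extended bilinearly from the basis to all of 𝔤. -/
def bracket (x y : GCA) : GCA :=
  x.sum fun bx cx => y.sum fun bz cz => (cx * cz) • bracketB bx bz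


-- scaffolding test
/-- auxiliary: bracket with a fixed basis element on the left, as a linear map -/
def brx (a : GBasis) : GCA →ₗ[ℝ] GCA :=
  Finsupp.lsum ℝ fun bz => LinearMap.smulRight (LinearMap.id : ℝ →ₗ[ℝ] ℝ) (bracketB a bz)

lemma brx_single (a b : GBasis) (c : ℝ) : brx a (Finsupp.single b c) = c • bracketB a b := by
  simp [brx]

lemma bracket_eq (x y : GCA) : bracket x y = x.sum fun bx cx => cx • brx bx y := by
  unfold bracket
  refine Finsupp.sum_congr fun bx _ => ?_
  simp [brx, Finsupp.lsum_apply, Finsupp.smul_sum, smul_smul]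

lemma bracket_single_left (a : GBasis) (c : ℝ) (y : GCA) :
    bracket (Finsupp.single a c) y = c • brx a y := by
  rw [bracket_eq, Finsupp.sum_single_index]; simp

lemma bracket_single_single (a b : GBasis) (c d : ℝ) :
    bracket (Finsupp.single a c) (Finsupp.single b d) = (c * d) • bracketB a b := by
  rw [bracket_single_left, brx_single, smul_smul]

lemma bracket_zero_left (y : GCA) : bracket 0 y = 0 := by simp [bracket]
lemma bracket_zero_right (x : GCA) : bracket x 0 = 0 := by simp [bracket]

lemma bracket_add_left (x x' y : GCA) :
    bracket (x + x') y = bracket x y + bracket x' y := by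
  rw [bracket_eq, bracket_eq, bracket_eq]
  exact Finsupp.sum_add_index' (by simp) (by intro b c c'; rw [add_smul])

lemma bracket_add_right (x y y' : GCA) :
    bracket x (y + y') = bracket x y + bracket x y' := by
  rw [bracket_eq, bracket_eq, bracket_eq, ← Finsupp.sum_add]
  refine Finsupp.sum_congr fun bx _ => ?_
  rw [map_add, smul_add]

lemma bracket_smul_right (c : ℝ) (x y : GCA) :
    bracket x (c • y) = c • bracket x y := by
  rw [bracket_eq, bracket_eq, Finsupp.smul_sum]
  refine Finsupp.sum_congr fun bx _ => ?_
  rw [map_smul, smul_comm]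

lemma bracketB_antisymm (a b : GBasis) : bracketB a b = -bracketB b a := by
  cases a <;> cases b
  case L.L m n =>
    simp only [bracketB]
    rw [add_comm n m]
    split_ifs with h
    · have hn : (n : ℝ) = -m := by push_cast [show n = -m by omega]; ring
      rw [neg_add, ← neg_smul, ← neg_smul, neg_sub]
      congr 2
      rw [hn]; ring
    · rw [add_zero, neg_add, neg_zero, add_zero, ← neg_smul, neg_sub]
  case J.J m n =>
    simp only [bracketB]
    rw [add_comm n m]
    split_ifs with h
    · have hn : (n : ℝ) = -m := by push_cast [show n = -m by omega]; ring
      rw [← neg_smul, hn, neg_neg]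
    · rw [neg_zero]
  all_goals simp [bracketB]

lemma bracket_antisymm (x y : GCA) : bracket x y = -bracket y x := by
  rw [eq_neg_iff_add_eq_zero]
  unfold bracket
  rw [Finsupp.sum_comm y x]
  rw [← Finsupp.sum_add]
  refine Finset.sum_eq_zero fun bx _ => ?_
  simp only
  rw [← Finsupp.sum_add]
  refine Finset.sum_eq_zero fun bz _ => ?_
  simp only
  rw [bracketB_antisymm bz bx, mul_comm, smul_neg, add_neg_cancel]

lemma jacLLL (m n p : ℤ) :
    brx (GBasis.L m) (bracketB (.L n) (.L p)) + brx (GBasis.L n) (bracketB (.L p) (.L m))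
      + brx (GBasis.L p) (bracketB (.L m) (.L n)) = 0 := by
  simp only [bracketB, map_add, map_smul, map_neg, map_zero, brx_single, apply_ite (brx _),
    smul_add, smul_zero, smul_smul, ite_self, add_zero, mul_one, one_mul]
  rw [show n + (p + m) = m + (n + p) by ring, show p + (m + n) = m + (n + p) by ring]
  split_ifs with h
  · obtain rfl : p = -m - n := by omega
    match_scalars <;> push_cast <;> ring
  · match_scalars <;> ring



lemma rot3 {M : Type} [AddCommGroup M] {A B C : M} (h : A + B + C = 0) :
    B + C + A = 0 := by rwa [← add_rotate]

lemma jacLLJ (m n p : ℤ) :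
    brx (GBasis.L m) (bracketB (.L n) (.J p)) + brx (GBasis.L n) (bracketB (.J p) (.L m))
      + brx (GBasis.J p) (bracketB (.L m) (.L n)) = 0 := by
  simp only [bracketB, map_add, map_smul, map_neg, map_zero, map_sum, brx_single,
    apply_ite (brx _), smul_add, smul_zero, smul_smul, smul_neg, neg_neg, ite_self,
    add_zero, zero_add, neg_zero, mul_one, one_mul, Fin.sum_univ_two]
  ring_nf
  match_scalars <;> push_cast <;> ring

lemma jacLJL (m n p : ℤ) :
    brx (GBasis.L m) (bracketB (.J n) (.L p)) + brx (GBasis.J n) (bracketB (.L p) (.L m))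
      + brx (GBasis.L p) (bracketB (.L m) (.J n)) = 0 := rot3 (jacLLJ p m n)

lemma jacJLL (m n p : ℤ) :
    brx (GBasis.J m) (bracketB (.L n) (.L p)) + brx (GBasis.L n) (bracketB (.L p) (.J m))
      + brx (GBasis.L p) (bracketB (.J m) (.L n)) = 0 := rot3 (rot3 (jacLLJ n p m))

lemma jacLLP (m n p : ℤ) (i : Fin 2) :
    brx (GBasis.L m) (bracketB (.L n) (.P i p)) + brx (GBasis.L n) (bracketB (.P i p) (.L m))
      + brx (GBasis.P i p) (bracketB (.L m) (.L n)) = 0 := by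
  simp only [bracketB, map_add, map_smul, map_neg, map_zero, map_sum, brx_single,
    apply_ite (brx _), smul_add, smul_zero, smul_smul, smul_neg, neg_neg, ite_self,
    add_zero, zero_add, neg_zero, mul_one, one_mul, Fin.sum_univ_two]
  ring_nf
  match_scalars <;> push_cast <;> ring

lemma jacLPL (m n p : ℤ) (i : Fin 2) :
    brx (GBasis.L m) (bracketB (.P i n) (.L p)) + brx (GBasis.P i n) (bracketB (.L p) (.L m))
      + brx (GBasis.L p) (bracketB (.L m) (.P i n)) = 0 := rot3 (jacLLP p m n i)

lemma jacPLL (m n p : ℤ) (i : Fin 2) :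
    brx (GBasis.P i m) (bracketB (.L n) (.L p)) + brx (GBasis.L n) (bracketB (.L p) (.P i m))
      + brx (GBasis.L p) (bracketB (.P i m) (.L n)) = 0 := rot3 (rot3 (jacLLP n p m i))

lemma jacLJJ (m n p : ℤ) :
    brx (GBasis.L m) (bracketB (.J n) (.J p)) + brx (GBasis.J n) (bracketB (.J p) (.L m))
      + brx (GBasis.J p) (bracketB (.L m) (.J n)) = 0 := by
  simp only [bracketB, map_add, map_smul, map_neg, map_zero, map_sum, brx_single,
    apply_ite (brx _), smul_add, smul_zero, smul_smul, smul_neg, neg_neg, ite_self,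
    add_zero, zero_add, neg_zero, mul_one, one_mul, Fin.sum_univ_two]
  ring_nf
  split_ifs <;> first
    | (exfalso; omega)
    | (match_scalars <;> push_cast <;> ring)

lemma jacJJL (m n p : ℤ) :
    brx (GBasis.J m) (bracketB (.J n) (.L p)) + brx (GBasis.J n) (bracketB (.L p) (.J m))
      + brx (GBasis.L p) (bracketB (.J m) (.J n)) = 0 := rot3 (jacLJJ p m n)

lemma jacJLJ (m n p : ℤ) :
    brx (GBasis.J m) (bracketB (.L n) (.J p)) + brx (GBasis.L n) (bracketB (.J p) (.J m))
      + brx (GBasis.J p) (bracketB (.J m) (.L n)) = 0 := rot3 (rot3 (jacLJJ n p m))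

lemma jacLJP (m n p : ℤ) (i : Fin 2) :
    brx (GBasis.L m) (bracketB (.J n) (.P i p)) + brx (GBasis.J n) (bracketB (.P i p) (.L m))
      + brx (GBasis.P i p) (bracketB (.L m) (.J n)) = 0 := by
  simp only [bracketB, map_add, map_smul, map_neg, map_zero, map_sum, brx_single,
    apply_ite (brx _), smul_add, smul_zero, smul_smul, smul_neg, neg_neg, ite_self,
    add_zero, zero_add, neg_zero, mul_one, one_mul, Fin.sum_univ_two]
  ring_nf
  match_scalars <;> push_cast <;> ring

lemma jacJPL (m n p : ℤ) (i : Fin 2) :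
    brx (GBasis.J m) (bracketB (.P i n) (.L p)) + brx (GBasis.P i n) (bracketB (.L p) (.J m))
      + brx (GBasis.L p) (bracketB (.J m) (.P i n)) = 0 := rot3 (jacLJP p m n i)

lemma jacPLJ (m n p : ℤ) (i : Fin 2) :
    brx (GBasis.P i m) (bracketB (.L n) (.J p)) + brx (GBasis.L n) (bracketB (.J p) (.P i m))
      + brx (GBasis.J p) (bracketB (.P i m) (.L n)) = 0 := rot3 (rot3 (jacLJP n p m i))

lemma jacLPJ (m n p : ℤ) (i : Fin 2) :
    brx (GBasis.L m) (bracketB (.P i n) (.J p)) + brx (GBasis.P i n) (bracketB (.J p) (.L m))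
      + brx (GBasis.J p) (bracketB (.L m) (.P i n)) = 0 := by
  simp only [bracketB, map_add, map_smul, map_neg, map_zero, map_sum, brx_single,
    apply_ite (brx _), smul_add, smul_zero, smul_smul, smul_neg, neg_neg, ite_self,
    add_zero, zero_add, neg_zero, mul_one, one_mul, Fin.sum_univ_two]
  ring_nf
  match_scalars <;> push_cast <;> ring

lemma jacPJL (m n p : ℤ) (i : Fin 2) :
    brx (GBasis.P i m) (bracketB (.J n) (.L p)) + brx (GBasis.J n) (bracketB (.L p) (.P i m))
      + brx (GBasis.L p) (bracketB (.P i m) (.J n)) = 0 := rot3 (jacLPJ p m n i)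

lemma jacJLP (m n p : ℤ) (i : Fin 2) :
    brx (GBasis.J m) (bracketB (.L n) (.P i p)) + brx (GBasis.L n) (bracketB (.P i p) (.J m))
      + brx (GBasis.P i p) (bracketB (.J m) (.L n)) = 0 := rot3 (rot3 (jacLPJ n p m i))

lemma jacJJP (m n p : ℤ) (i : Fin 2) :
    brx (GBasis.J m) (bracketB (.J n) (.P i p)) + brx (GBasis.J n) (bracketB (.P i p) (.J m))
      + brx (GBasis.P i p) (bracketB (.J m) (.J n)) = 0 := by
  simp only [bracketB, map_add, map_smul, map_neg, map_zero, map_sum, brx_single,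
    apply_ite (brx _), smul_add, smul_zero, smul_smul, smul_neg, neg_neg, ite_self,
    add_zero, zero_add, neg_zero, mul_one, one_mul, Fin.sum_univ_two]
  ring_nf
  match_scalars <;> push_cast <;> ring

lemma jacJPJ (m n p : ℤ) (i : Fin 2) :
    brx (GBasis.J m) (bracketB (.P i n) (.J p)) + brx (GBasis.P i n) (bracketB (.J p) (.J m))
      + brx (GBasis.J p) (bracketB (.J m) (.P i n)) = 0 := rot3 (jacJJP p m n i)

lemma jacPJJ (m n p : ℤ) (i : Fin 2) :
    brx (GBasis.P i m) (bracketB (.J n) (.J p)) + brx (GBasis.J n) (bracketB (.J p) (.P i m))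
      + brx (GBasis.J p) (bracketB (.P i m) (.J n)) = 0 := rot3 (rot3 (jacJJP n p m i))

lemma jacB (a b e : GBasis) :
    brx a (bracketB b e) + brx b (bracketB e a) + brx e (bracketB a b) = 0 := by
  cases a <;> cases b <;> cases e
  case L.L.L m n p => exact jacLLL m n p
  case L.L.J m n p => exact jacLLJ m n p
  case L.J.L m n p => exact jacLJL m n p
  case J.L.L m n p => exact jacJLL m n p
  case L.L.P m n i p => exact jacLLP m n p i
  case L.P.L m i n p => exact jacLPL m n p i
  case P.L.L i m n p => exact jacPLL m n p i
  case L.J.J m n p => exact jacLJJ m n p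
  case J.J.L m n p => exact jacJJL m n p
  case J.L.J m n p => exact jacJLJ m n p
  case L.J.P m n i p => exact jacLJP m n p i
  case J.P.L m i n p => exact jacJPL m n p i
  case P.L.J i m n p => exact jacPLJ m n p i
  case L.P.J m i n p => exact jacLPJ m n p i
  case P.J.L i m n p => exact jacPJL m n p i
  case J.L.P m n i p => exact jacJLP m n p i
  case J.J.P m n i p => exact jacJJP m n p i
  case J.P.J m i n p => exact jacJPJ m n p i
  case P.J.J i m n p => exact jacPJJ m n p i
  all_goals
    simp [bracketB, map_add, map_smul, map_neg, map_zero, map_sum, brx_single,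
      apply_ite (brx _), smul_add, smul_zero, smul_smul, smul_neg, ite_self,
      Fin.sum_univ_two, eps]

lemma jac_single (a b e : GBasis) (c d f : ℝ) :
    bracket (Finsupp.single a c) (bracket (Finsupp.single b d) (Finsupp.single e f)) +
      bracket (Finsupp.single b d) (bracket (Finsupp.single e f) (Finsupp.single a c)) +
      bracket (Finsupp.single e f) (bracket (Finsupp.single a c) (Finsupp.single b d)) = 0 := by
  rw [bracket_single_single, bracket_single_single, bracket_single_single,
    bracket_smul_right, bracket_smul_right, bracket_smul_right,
    bracket_single_left, bracket_single_left, bracket_single_left,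
    smul_smul, smul_smul, smul_smul,
    show (f * c) * d = (d * f) * c by ring, show (c * d) * f = (d * f) * c by ring,
    ← smul_add, ← smul_add, jacB, smul_zero]

/-- The bracket of the centrally extended planar Galilean conformal algebra is
antisymmetric and satisfies the Jacobi identity; hence it makes the free real
vector space on the basis a real Lie algebra. -/
theorem bracket_antisymm_and_jacobi :
    (∀ x y : GCA, bracket x y = -bracket y x) ∧
    (∀ x y z : GCA,
      bracket x (bracket y z) + bracket y (bracket z x) + bracket z (bracket x y) = 0) := by
  refine ⟨bracket_antisymm, fun x y z => ?_⟩
  induction x using Finsupp.induction_linear with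
  | zero => simp [bracket_zero_left, bracket_zero_right]
  | add f g hf hg =>
      simp only [bracket_add_left, bracket_add_right]
      calc _ = (bracket f (bracket y z) + bracket y (bracket z f) + bracket z (bracket f y))
            + (bracket g (bracket y z) + bracket y (bracket z g) + bracket z (bracket g y)) := by
              abel
        _ = 0 := by rw [hf, hg, add_zero]
  | single a c =>
    induction y using Finsupp.induction_linear with
    | zero => simp [bracket_zero_left, bracket_zero_right]
    | add f g hf hg =>
        simp only [bracket_add_left, bracket_add_right]
        calc _ = (bracket (Finsupp.single a c) (bracket f z) + bracket f (bracket z (Finsupp.single a c))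
              + bracket z (bracket (Finsupp.single a c) f))
            + (bracket (Finsupp.single a c) (bracket g z) + bracket g (bracket z (Finsupp.single a c))
              + bracket z (bracket (Finsupp.single a c) g)) := by abel
          _ = 0 := by rw [hf, hg, add_zero]
    | single b d =>
      induction z using Finsupp.induction_linear with
      | zero => simp [bracket_zero_left, bracket_zero_right]
      | add f g hf hg =>
          simp only [bracket_add_left, bracket_add_right]
          calc _ = (bracket (Finsupp.single a c) (bracket (Finsupp.single b d) f)
                + bracket (Finsupp.single b d) (bracket f (Finsupp.single a c))
                + bracket f (bracket (Finsupp.single a c) (Finsupp.single b d)))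
              + (bracket (Finsupp.single a c) (bracket (Finsupp.single b d) g)
                + bracket (Finsupp.single b d) (bracket g (Finsupp.single a c))
                + bracket g (bracket (Finsupp.single a c) (Finsupp.single b d))) := by abel
            _ = 0 := by rw [hf, hg, add_zero]
      | single e f => exact jac_single a b e c d f


end
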